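/- Let f be a nondegenerate linear threshold function on n variables, i.e., an LTF such that for every i ∈ {1,…,n} there exist two inputs differing only in the i-th coordinate on which f takes different values. Then the N-type class of f, the set {f ∘ γ_u : u ∈ {0,1}^n} of all u-complementations of f, contains exactly 2^n distinct boolean functions; equivalently, the map u ↦ f ∘ γ_u is injective. -/
import Mathlib


/-- Dot product of a rational weight vector with a 0-1 boolean vector. -/
def dotProd {n : ℕ} (w : Fin n → ℚ) (x : Fin n → Bool) : ℚ :=
  ∑ i, if x i then w i else 0

/-- `(w, θ)` is a realization of the boolean function `f`. -/
def IsRealization {n : ℕ} (f : (Fin n → Bool) → Bool) (w : Fin n → ℚ) (θ : ℚ) : Prop :=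
  ∀ x, f x = true ↔ θ < dotProd w x

/-- `f` is a linear threshold function. -/
def IsLTF {n : ℕ} (f : (Fin n → Bool) → Bool) : Prop :=
  ∃ w θ, IsRealization f w θ

lemma dot_update {n : ℕ} (w : Fin n → ℚ) (x : Fin n → Bool) (i : Fin n) :
    dotProd w (Function.update x i true)
      = dotProd w (Function.update x i false) + w i := by
  unfold dotProd
  rw [← Finset.sum_erase_add _ _ (Finset.mem_univ i),
      ← Finset.sum_erase_add _ _ (Finset.mem_univ i)]
  have h : ∀ b : Bool, ∑ j ∈ Finset.univ.erase i,
      (if Function.update x i b j then w j else 0)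
      = ∑ j ∈ Finset.univ.erase i, (if x j then w j else 0) := by
    intro b
    refine Finset.sum_congr rfl fun j hj => ?_
    rw [Function.update_of_ne (Finset.ne_of_mem_erase hj)]
  rw [h, h]
  simp

/-- The N-type class of a nondegenerate LTF on `n` variables has exactly `2^n` distinct
elements: the map `u ↦ f ∘ γ_u` is injective. -/
theorem stmt_16 (n : ℕ) (f : (Fin n → Bool) → Bool) (hf : IsLTF f)
    (hnd : ∀ i : Fin n, ∃ x : Fin n → Bool,
      f (Function.update x i true) ≠ f (Function.update x i false)) :
    Function.Injective
      (fun u : Fin n → Bool => fun x : Fin n → Bool => f (fun i => xor (u i) (x i))) := by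
  obtain ⟨w, θ, hw⟩ := hf
  intro u v huv
  funext i
  by_contra hne
  -- s flips coordinate i
  set s : Fin n → Bool := fun j => xor (u j) (v j) with hs
  have hsi : s i = true := by
    simp only [hs]
    revert hne; cases u i <;> cases v i <;> simp
  have key : ∀ x : Fin n → Bool,
      f (fun j => xor (u j) (x j)) = f (fun j => xor (v j) (x j)) := by
    intro x
    exact congrFun huv x
  have key2 : ∀ y : Fin n → Bool, f y = f (fun j => xor (s j) (y j)) := by
    intro y
    have := key (fun j => xor (u j) (y j))
    have h1 : (fun j => xor (u j) (xor (u j) (y j))) = y := by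
      funext j; cases u j <;> cases y j <;> rfl
    have h2 : (fun j => xor (v j) (xor (u j) (y j)))
        = fun j => xor (s j) (y j) := by
      funext j; simp only [hs]; cases u j <;> cases v j <;> cases y j <;> rfl
    rw [h1, h2] at this
    exact this
  obtain ⟨x, hx⟩ := hnd i
  -- w i ≠ 0
  have hwi : w i ≠ 0 := by
    intro h0
    apply hx
    have hd := dot_update w x i
    rw [h0, add_zero] at hd
    have hiff : f (Function.update x i true) = true
        ↔ f (Function.update x i false) = true := by
      rw [hw, hw, hd]
    exact Bool.eq_iff_iff.mpr hiff
  -- z = γ_s x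
  set z : Fin n → Bool := fun j => xor (s j) (x j) with hz
  have hzt : (fun j => xor (s j) (Function.update x i true j))
      = Function.update z i false := by
    funext j
    by_cases hj : j = i
    · subst hj; simp [hsi, hz]
    · simp [Function.update_of_ne hj, hz]
  have hzf : (fun j => xor (s j) (Function.update x i false j))
      = Function.update z i true := by
    funext j
    by_cases hj : j = i
    · subst hj; simp [hsi, hz]
    · simp [Function.update_of_ne hj, hz]
  have e1 : f (Function.update x i true) = f (Function.update z i false) := by
    rw [key2 (Function.update x i true), hzt]
  have e2 : f (Function.update x i false) = f (Function.update z i true) := by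
    rw [key2 (Function.update x i false), hzf]
  rcases lt_or_gt_of_ne hwi with hneg | hpos
  · -- w i < 0 : f (update y i false) = true → f (update y i true) = true?? No:
    -- dot(update y i true) = dot(update y i false) + w i < dot false, so
    -- f true = true → f false = true
    have mono : ∀ y : Fin n → Bool, f (Function.update y i true) = true →
        f (Function.update y i false) = true := by
      intro y hy
      have := (hw _).mp hy
      refine (hw _).mpr ?_
      have hd := dot_update w y i
      linarith
    -- hx : f xT ≠ f xF. If f xT = true then f xF = true, contra. So f xT = false, f xF = true.
    have hxT : f (Function.update x i true) = false := by
      cases h : f (Function.update x i true)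
      · rfl
      · exact absurd (h.trans (mono x h).symm) hx
    have hxF : f (Function.update x i false) = true := by
      cases h : f (Function.update x i false)
      · exact absurd (hxT.trans h.symm) hx
      · rfl
    -- e2: f xF = f (update z i true) = true, so mono gives f (update z i false) = true,
    -- but e1: f (update z i false) = f xT = false.
    have := mono z (e2 ▸ hxF)
    rw [← e1, hxT] at this
    exact Bool.noConfusion this
  · have mono : ∀ y : Fin n → Bool, f (Function.update y i false) = true →
        f (Function.update y i true) = true := by
      intro y hy
      have := (hw _).mp hy
      refine (hw _).mpr ?_
      have hd := dot_update w y i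
      linarith
    have hxF : f (Function.update x i false) = false := by
      cases h : f (Function.update x i false)
      · rfl
      · exact absurd ((mono x h).trans h.symm) hx
    have hxT : f (Function.update x i true) = true := by
      cases h : f (Function.update x i true)
      · exact absurd (h.trans hxF.symm) hx
      · rfl
    have := mono z (e1 ▸ hxT)
    rw [← e2, hxF] at this
    exact Bool.noConfusion this
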